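/- arXiv:1704.04778 — 4 statements merged into one kernel-verified Lean document; each statement's English description precedes it below -/
import Mathlib

section
/- Let μ be a positive Radon measure on ℝ^d which is weakly admissible, i.e., for every continuous compactly supported function f : ℝ^d → ℂ the Fourier transform 𝓕f lies in L²(μ). Then for every compact set K ⊆ ℝ^d there exists a constant C_K ≥ 0 such that for every continuous f : ℝ^d → ℂ with support contained in K one has (∫_{ℝ^d} ‖𝓕f(ξ)‖² dμ(ξ))^{1/2} ≤ C_K · ‖f‖_∞. -/
open MeasureTheory Metric Filter
open scoped FourierTransform RealInnerProductSpace ENNReal Topology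

open scoped BoundedContinuousFunction

noncomputable section

private lemma fourier_add_aux {d : ℕ} {a b : EuclideanSpace ℝ (Fin d) → ℂ}
    (ha : Integrable a) (hb : Integrable b) :
    𝓕 (a + b) = 𝓕 a + 𝓕 b := by
  ext ξ
  simp only [Real.fourier_eq, Pi.add_apply, smul_add]
  exact integral_add ((Real.fourierIntegral_convergent_iff ξ).2 ha)
    ((Real.fourierIntegral_convergent_iff ξ).2 hb)

private lemma fourier_sub_aux {d : ℕ} {a b : EuclideanSpace ℝ (Fin d) → ℂ}
    (ha : Integrable a) (hb : Integrable b) :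
    𝓕 (a - b) = 𝓕 a - 𝓕 b := by
  ext ξ
  simp only [Real.fourier_eq, Pi.sub_apply, smul_sub]
  exact integral_sub ((Real.fourierIntegral_convergent_iff ξ).2 ha)
    ((Real.fourierIntegral_convergent_iff ξ).2 hb)

private lemma fourier_smul_aux {d : ℕ} (c : ℂ) (a : EuclideanSpace ℝ (Fin d) → ℂ) :
    𝓕 (c • a) = c • 𝓕 a :=
  VectorFourier.fourierIntegral_const_smul _ _ _ _ _

private lemma fourier_norm_le_aux {d : ℕ} (g : EuclideanSpace ℝ (Fin d) → ℂ)
    (ξ : EuclideanSpace ℝ (Fin d)) :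
    ‖𝓕 g ξ‖ ≤ ∫ v, ‖g v‖ :=
  VectorFourier.norm_fourierIntegral_le_integral_norm _ _ _ _ _

private lemma norm_toLp_eq_sqrt {α} [MeasurableSpace α] {μ : Measure α} {g : α → ℂ}
    (hg : MemLp g 2 μ) : ‖hg.toLp g‖ = Real.sqrt (∫ ξ, ‖g ξ‖ ^ 2 ∂μ) := by
  rw [Lp.norm_toLp, hg.eLpNorm_eq_integral_rpow_norm two_ne_zero ENNReal.ofNat_ne_top,
    ENNReal.toReal_ofReal (Real.rpow_nonneg
      (integral_nonneg fun a => Real.rpow_nonneg (norm_nonneg _) _) _),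
    Real.sqrt_eq_rpow]
  norm_num [Real.rpow_natCast]

/-- If a positive Radon measure `μ` on `ℝ^d` is weakly admissible (the Fourier
transform of every continuous compactly supported function is in `L²(μ)`), then for every compact
set `K` there is a constant `C_K ≥ 0` with
`(∫ ‖𝓕f‖² dμ)^{1/2} ≤ C_K · ‖f‖_∞` for all continuous `f` supported in `K`. -/
theorem fourierTransformable_sap_stmt0 {d : ℕ}
    (μ : Measure (EuclideanSpace ℝ (Fin d))) [μ.Regular]
    (hadm : ∀ f : EuclideanSpace ℝ (Fin d) → ℂ, Continuous f → HasCompactSupport f →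
      MemLp (𝓕 f) 2 μ) :
    ∀ K : Set (EuclideanSpace ℝ (Fin d)), IsCompact K →
      ∃ C : ℝ, 0 ≤ C ∧ ∀ f : EuclideanSpace ℝ (Fin d) → ℂ, Continuous f →
        Function.support f ⊆ K →
        Real.sqrt (∫ ξ, ‖𝓕 f ξ‖ ^ 2 ∂μ) ≤ C * ⨆ t, ‖f t‖ := by
  intro K hK
  classical
  -- the Banach space of bounded continuous functions supported in `K`
  let S : Submodule ℂ (EuclideanSpace ℝ (Fin d) →ᵇ ℂ) :=
    { carrier := {f | ∀ x, x ∉ K → f x = 0}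
      add_mem' := fun hf hg x hx => by
        simp only [BoundedContinuousFunction.coe_add, Pi.add_apply, hf x hx, hg x hx, add_zero]
      zero_mem' := fun x _ => rfl
      smul_mem' := fun c f hf x hx => by
        simp only [BoundedContinuousFunction.coe_smul, Pi.smul_apply, hf x hx, smul_zero] }
  have hSclosed : IsClosed (S : Set (EuclideanSpace ℝ (Fin d) →ᵇ ℂ)) := by
    have hset : (S : Set (EuclideanSpace ℝ (Fin d) →ᵇ ℂ)) =
        ⋂ x ∈ Kᶜ, {f : EuclideanSpace ℝ (Fin d) →ᵇ ℂ | f x = 0} := by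
      ext f
      simp [S, Set.mem_iInter]
      exact Iff.rfl
    rw [hset]
    exact isClosed_biInter fun x _ =>
      isClosed_eq (continuous_eval_const x) continuous_const
  haveI : CompleteSpace S := hSclosed.completeSpace_coe
  -- basic facts about elements of `S`
  have hScont : ∀ f : S, Continuous (⇑(f : EuclideanSpace ℝ (Fin d) →ᵇ ℂ)) :=
    fun f => (f : EuclideanSpace ℝ (Fin d) →ᵇ ℂ).continuous
  have hScs : ∀ f : S, HasCompactSupport (⇑(f : EuclideanSpace ℝ (Fin d) →ᵇ ℂ)) :=
    fun f => HasCompactSupport.intro hK f.2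
  have hSint : ∀ f : S, Integrable (⇑(f : EuclideanSpace ℝ (Fin d) →ᵇ ℂ)) :=
    fun f => (hScont f).integrable_of_hasCompactSupport (hScs f)
  have hSmem : ∀ f : S, MemLp (𝓕 (⇑(f : EuclideanSpace ℝ (Fin d) →ᵇ ℂ))) 2 μ :=
    fun f => hadm _ (hScont f) (hScs f)
  -- the linear map `f ↦ 𝓕 f` into `L²(μ)`
  let T0 : S →ₗ[ℂ] Lp ℂ 2 μ :=
    { toFun := fun f => (hSmem f).toLp _
      map_add' := by
        intro f g
        have hco : ⇑((↑(f + g) : EuclideanSpace ℝ (Fin d) →ᵇ ℂ)) =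
            ⇑(f : EuclideanSpace ℝ (Fin d) →ᵇ ℂ) + ⇑(g : EuclideanSpace ℝ (Fin d) →ᵇ ℂ) := rfl
        simp only [hco, fourier_add_aux (hSint f) (hSint g)]
        exact MemLp.toLp_add _ _
      map_smul' := by
        intro c f
        have hco : ⇑((↑(c • f) : EuclideanSpace ℝ (Fin d) →ᵇ ℂ)) =
            c • ⇑(f : EuclideanSpace ℝ (Fin d) →ᵇ ℂ) := rfl
        simp only [hco, fourier_smul_aux c, RingHom.id_apply]
        exact MemLp.toLp_const_smul _ _
      }
  haveI : Fact ((1 : ℝ≥0∞) ≤ 2) := ⟨one_le_two⟩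
  -- the graph of `T0` is sequentially closed
  have hgraph : ∀ (u : ℕ → S) (x : S) (y : Lp ℂ 2 μ), Tendsto u atTop (𝓝 x) →
      Tendsto (T0 ∘ u) atTop (𝓝 y) → y = T0 x := by
    intro u x y hux hTy
    have hcoe : Tendsto (fun n => ((u n : EuclideanSpace ℝ (Fin d) →ᵇ ℂ)))
        atTop (𝓝 (x : EuclideanSpace ℝ (Fin d) →ᵇ ℂ)) :=
      ((continuous_subtype_val).tendsto x).comp hux
    have hnorm0 : Tendsto
        (fun n => ‖(u n : EuclideanSpace ℝ (Fin d) →ᵇ ℂ) - (x : EuclideanSpace ℝ (Fin d) →ᵇ ℂ)‖)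
        atTop (𝓝 0) := by
      rw [← tendsto_iff_norm_sub_tendsto_zero] at *
      exact hcoe
    -- pointwise convergence of the Fourier transforms
    have hpt : ∀ ξ, Tendsto (fun n => 𝓕 (⇑(u n : EuclideanSpace ℝ (Fin d) →ᵇ ℂ)) ξ) atTop
        (𝓝 (𝓕 (⇑(x : EuclideanSpace ℝ (Fin d) →ᵇ ℂ)) ξ)) := by
      intro ξ
      rw [tendsto_iff_norm_sub_tendsto_zero]
      have hb : ∀ n, ‖𝓕 (⇑(u n : EuclideanSpace ℝ (Fin d) →ᵇ ℂ)) ξ -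
          𝓕 (⇑(x : EuclideanSpace ℝ (Fin d) →ᵇ ℂ)) ξ‖ ≤
          ‖(u n : EuclideanSpace ℝ (Fin d) →ᵇ ℂ) - (x : EuclideanSpace ℝ (Fin d) →ᵇ ℂ)‖ *
            (volume K).toReal := by
        intro n
        set g : EuclideanSpace ℝ (Fin d) → ℂ :=
          ⇑(u n : EuclideanSpace ℝ (Fin d) →ᵇ ℂ) - ⇑(x : EuclideanSpace ℝ (Fin d) →ᵇ ℂ) with hg
        have hgc : Continuous g := (hScont (u n)).sub (hScont x)
        have hgzero : ∀ v, v ∉ K → g v = 0 := fun v hv => by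
          simp [hg, (u n).2 v hv, x.2 v hv]
        have h1 : 𝓕 (⇑(u n : EuclideanSpace ℝ (Fin d) →ᵇ ℂ)) ξ -
            𝓕 (⇑(x : EuclideanSpace ℝ (Fin d) →ᵇ ℂ)) ξ = 𝓕 g ξ := by
          rw [hg, fourier_sub_aux (hSint (u n)) (hSint x)]; rfl
        rw [h1]
        have h2 : ‖𝓕 g ξ‖ ≤ ∫ v, ‖g v‖ := fourier_norm_le_aux g ξ
        have h3 : (∫ v, ‖g v‖) = ∫ v in K, ‖g v‖ := by
          rw [setIntegral_eq_integral_of_forall_compl_eq_zero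
            (fun v hv => by rw [hgzero v hv, norm_zero])]
        have h4 : (∫ v in K, ‖g v‖) ≤
            ‖(u n : EuclideanSpace ℝ (Fin d) →ᵇ ℂ) - (x : EuclideanSpace ℝ (Fin d) →ᵇ ℂ)‖ *
              (volume K).toReal := by
          refine le_trans (le_abs_self _) ?_
          rw [← Real.norm_eq_abs]
          refine norm_setIntegral_le_of_norm_le_const hK.measure_lt_top (fun v _ => ?_)
          rw [Real.norm_eq_abs, abs_of_nonneg (norm_nonneg _)]
          exact BoundedContinuousFunction.norm_coe_le_norm ((u n : EuclideanSpace ℝ (Fin d) →ᵇ ℂ) - (x : EuclideanSpace ℝ (Fin d) →ᵇ ℂ)) v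
        calc ‖𝓕 g ξ‖ ≤ ∫ v, ‖g v‖ := h2
          _ = ∫ v in K, ‖g v‖ := h3
          _ ≤ _ := h4
      have hlim : Tendsto
          (fun n =>
            ‖(u n : EuclideanSpace ℝ (Fin d) →ᵇ ℂ) - (x : EuclideanSpace ℝ (Fin d) →ᵇ ℂ)‖ *
              (volume K).toReal) atTop (𝓝 0) := by
        simpa using hnorm0.mul_const (volume K).toReal
      exact squeeze_zero (fun n => norm_nonneg _) hb hlim
    -- convergence in `L²(μ)` gives an a.e. convergent subsequence
    have hTy' : Tendsto (fun n => T0 (u n)) atTop (𝓝 y) := hTy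
    have hsnorm : Tendsto (fun n => eLpNorm (⇑(T0 (u n)) - ⇑y) 2 μ) atTop (𝓝 0) :=
      (Lp.tendsto_Lp_iff_tendsto_eLpNorm' (fun n => T0 (u n)) y).1 hTy'
    have him : TendstoInMeasure μ (fun n => ⇑(T0 (u n))) atTop ⇑y :=
      tendstoInMeasure_of_tendsto_eLpNorm (p := 2) two_ne_zero
        (fun n => Lp.aestronglyMeasurable _) (Lp.aestronglyMeasurable y) hsnorm
    obtain ⟨ns, hns, hae⟩ := him.exists_seq_tendsto_ae
    have hcoeT : ∀ᵐ ξ ∂μ, ∀ n : ℕ,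
        ⇑(T0 (u (ns n))) ξ = 𝓕 (⇑(u (ns n) : EuclideanSpace ℝ (Fin d) →ᵇ ℂ)) ξ := by
      rw [ae_all_iff]
      intro n
      exact MemLp.coeFn_toLp (hSmem (u (ns n)))
    have hTx : ⇑(T0 x) =ᵐ[μ] 𝓕 (⇑(x : EuclideanSpace ℝ (Fin d) →ᵇ ℂ)) := MemLp.coeFn_toLp (hSmem x)
    symm
    refine Lp.ext ?_
    filter_upwards [hae, hcoeT, hTx] with ξ h1 h2 h3
    have h4 : Tendsto (fun n => 𝓕 (⇑(u (ns n) : EuclideanSpace ℝ (Fin d) →ᵇ ℂ)) ξ) atTop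
        (𝓝 (⇑y ξ)) := by
      refine h1.congr fun n => h2 n
    have h5 : Tendsto (fun n => 𝓕 (⇑(u (ns n) : EuclideanSpace ℝ (Fin d) →ᵇ ℂ)) ξ) atTop
        (𝓝 (𝓕 (⇑(x : EuclideanSpace ℝ (Fin d) →ᵇ ℂ)) ξ)) :=
      (hpt ξ).comp hns.tendsto_atTop
    rw [h3]
    exact tendsto_nhds_unique h5 h4
  -- upgrade to a continuous linear map
  let T : S →L[ℂ] Lp ℂ 2 μ := ContinuousLinearMap.ofSeqClosedGraph hgraph
  refine ⟨‖T‖, ContinuousLinearMap.opNorm_nonneg T, ?_⟩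
  intro f hf hsupp
  have hzero : ∀ x, x ∉ K → f x = 0 := fun x hx => by
    by_contra h
    exact hx (hsupp (Function.mem_support.2 h))
  have hcs : HasCompactSupport f := HasCompactSupport.intro hK hzero
  obtain ⟨Cb, hCb⟩ : ∃ C, ∀ x, ‖f x‖ ≤ C := hf.bounded_above_of_compact_support hcs
  let fb : EuclideanSpace ℝ (Fin d) →ᵇ ℂ :=
    BoundedContinuousFunction.ofNormedAddCommGroup f hf Cb hCb
  have hfb : ⇑fb = f := rfl
  have hmem : fb ∈ S := fun x hx => hzero x hx
  have key : ‖T ⟨fb, hmem⟩‖ ≤ ‖T‖ * ‖(⟨fb, hmem⟩ : S)‖ := T.le_opNorm _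
  have hT1 : T ⟨fb, hmem⟩ = (hSmem ⟨fb, hmem⟩).toLp _ := rfl
  have hT2 : ‖T ⟨fb, hmem⟩‖ = Real.sqrt (∫ ξ, ‖𝓕 f ξ‖ ^ 2 ∂μ) := by
    rw [hT1, norm_toLp_eq_sqrt]
    rfl
  have hT3 : ‖(⟨fb, hmem⟩ : S)‖ = ⨆ t, ‖f t‖ := by
    have : ‖(⟨fb, hmem⟩ : S)‖ = ‖fb‖ := rfl
    rw [this, BoundedContinuousFunction.norm_eq_iSup_norm]
    rfl
  rw [hT2, hT3] at key
  exact key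
end
end

section
/- Let μ be a positive Radon measure on ℝ^d which is weakly admissible, i.e., for every continuous compactly supported function f : ℝ^d → ℂ the Fourier transform 𝓕f lies in L²(μ). Then for every continuous compactly supported f : ℝ^d → ℂ, the function g : ℝ^d → ℝ defined by g(t) = ∫_{ℝ^d} ‖𝓕f(x+t)‖² dμ(x) is bounded and uniformly continuous on ℝ^d. -/
open MeasureTheory Metric Filter
open scoped FourierTransform RealInnerProductSpace ENNReal Topology BoundedContinuousFunction

noncomputable section

namespace SapAux

lemma norm_exp_mul_I_sub_one_le (x : ℝ) : ‖Complex.exp (x * Complex.I) - 1‖ ≤ |x| := by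
  have hs : 2 * Complex.sin (↑(x / 2)) * Complex.I
      = Complex.exp ((↑(x/2)) * Complex.I) - Complex.exp ((-↑(x/2)) * Complex.I) := by
    rw [Complex.sin]
    linear_combination (Complex.exp (-↑(x/2) * Complex.I) - Complex.exp (↑(x/2) * Complex.I)) *
      Complex.I_mul_I
  have e1 : Complex.exp ((↑(x/2)) * Complex.I) * Complex.exp ((↑(x/2)) * Complex.I)
      = Complex.exp (x * Complex.I) := by
    rw [← Complex.exp_add, ← add_mul]
    push_cast
    ring_nf
  have e2 : Complex.exp ((↑(x/2)) * Complex.I) * Complex.exp ((-↑(x/2)) * Complex.I) = 1 := by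
    rw [← Complex.exp_add, ← add_mul]
    push_cast
    ring_nf
    exact Complex.exp_zero
  have hexp : Complex.exp (x * Complex.I) - 1
      = Complex.exp ((↑(x/2)) * Complex.I) * (2 * Complex.sin (↑(x / 2)) * Complex.I) := by
    rw [hs, mul_sub, e1, e2]
  rw [hexp, norm_mul]
  have h1 : ‖Complex.exp ((↑(x/2)) * Complex.I)‖ = 1 := by
    simpa using Complex.norm_exp_ofReal_mul_I (x/2)
  rw [h1, one_mul]
  have h2 : ‖2 * Complex.sin (↑(x / 2)) * Complex.I‖ = 2 * |Real.sin (x/2)| := by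
    rw [norm_mul, norm_mul]
    simp only [Complex.norm_I, Complex.norm_two, mul_one]
    congr 1
    rw [← Complex.ofReal_sin, Complex.norm_real]
    norm_num
  rw [h2]
  calc 2 * |Real.sin (x/2)| ≤ 2 * |x/2| := by
        have := Real.abs_sin_le_abs (x := x/2)
        nlinarith [abs_nonneg (Real.sin (x/2))]
    _ = |x| := by rw [abs_div]; norm_num; ring

lemma norm_fourierChar_sub_le (a b : ℝ) :
    ‖(𝐞 a : ℂ) - 𝐞 b‖ ≤ 2 * Real.pi * |a - b| := by
  have h : (𝐞 a : ℂ) - 𝐞 b = (𝐞 b : ℂ) * ((𝐞 (a - b) : ℂ) - 1) := by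
    rw [mul_sub, mul_one, ← Circle.coe_mul, ← AddChar.map_add_eq_mul, add_sub_cancel]
  rw [h, norm_mul]
  have h1 : ‖(𝐞 b : ℂ)‖ = 1 := Circle.norm_coe _
  rw [h1, one_mul]
  have h2 := norm_exp_mul_I_sub_one_le (2 * Real.pi * (a - b))
  rw [Real.fourierChar_apply]
  refine h2.trans (le_of_eq ?_)
  rw [abs_mul, abs_of_nonneg (by positivity : (0:ℝ) ≤ 2 * Real.pi)]

variable {d : ℕ}

/-- The submodule of bounded continuous functions vanishing outside `K`. -/
def suppSM (K : Set (EuclideanSpace ℝ (Fin d))) :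
    Submodule ℂ (EuclideanSpace ℝ (Fin d) →ᵇ ℂ) where
  carrier := {g | ∀ x, x ∉ K → g x = 0}
  add_mem' := by
    intro a b ha hb x hx
    simp [ha x hx, hb x hx]
  zero_mem' := fun x _ => rfl
  smul_mem' := by
    intro c g hg x hx
    simp [hg x hx]

lemma isClosed_suppSM (K : Set (EuclideanSpace ℝ (Fin d))) :
    IsClosed ((suppSM K : Set (EuclideanSpace ℝ (Fin d) →ᵇ ℂ))) := by
  have : (suppSM K : Set (EuclideanSpace ℝ (Fin d) →ᵇ ℂ)) =
      ⋂ x ∈ Kᶜ, (fun g : EuclideanSpace ℝ (Fin d) →ᵇ ℂ => g x) ⁻¹' {0} := by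
    ext g
    simp only [SetLike.mem_coe, Set.mem_iInter, Set.mem_preimage, Set.mem_singleton_iff,
      Set.mem_compl_iff]
    exact Iff.rfl
  rw [this]
  exact isClosed_biInter fun x _ =>
    IsClosed.preimage (continuous_eval_const x) isClosed_singleton

instance (K : Set (EuclideanSpace ℝ (Fin d))) : CompleteSpace (suppSM K) :=
  (isClosed_suppSM K).completeSpace_coe

local notation "Xd" => EuclideanSpace ℝ (Fin d)

lemma fourier_sub {a b : Xd → ℂ} (ha : Integrable a) (hb : Integrable b) :
    𝓕 (a - b) = 𝓕 a - 𝓕 b := by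
  ext w
  simp only [Pi.sub_apply, Real.fourier_eq, smul_sub]
  rw [integral_sub]
  · exact (Real.fourierIntegral_convergent_iff w).2 ha
  · exact (Real.fourierIntegral_convergent_iff w).2 hb

lemma fourier_add {a b : Xd → ℂ} (ha : Integrable a) (hb : Integrable b) :
    𝓕 (a + b) = 𝓕 a + 𝓕 b := by
  ext w
  simp only [Pi.add_apply, Real.fourier_eq, smul_add]
  rw [integral_add]
  · exact (Real.fourierIntegral_convergent_iff w).2 ha
  · exact (Real.fourierIntegral_convergent_iff w).2 hb

lemma fourier_smul (c : ℂ) (a : Xd → ℂ) : 𝓕 (c • a) = c • 𝓕 a := by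
  ext w
  simp only [Pi.smul_apply, Real.fourier_eq, smul_comm _ c]
  rw [integral_smul]

lemma integral_norm_sq_eq {α : Type*} {m : MeasurableSpace α} {μ : Measure α} {F : α → ℂ}
    (hF : MemLp F 2 μ) : ∫ a, ‖F a‖ ^ 2 ∂μ = ‖hF.toLp F‖ ^ 2 := by
  haveI : Fact ((1:ℝ≥0∞) ≤ 2) := ⟨one_le_two⟩
  set G : Lp ℂ 2 μ := hF.toLp F with hG
  have h1 : ‖G‖ ^ 2 = RCLike.re (@inner ℂ _ _ G G) :=
    (@inner_self_eq_norm_sq ℂ _ _ _ _ G).symm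
  have h2 : (@inner ℂ _ _ G G) = ∫ a, @inner ℂ _ _ (G a) (G a) ∂μ :=
    MeasureTheory.L2.inner_def G G
  have h3 : (∫ a, @inner ℂ _ _ (G a) (G a) ∂μ) = ∫ a, ((‖F a‖ ^ 2 : ℝ) : ℂ) ∂μ := by
    refine integral_congr_ae ?_
    filter_upwards [hF.coeFn_toLp] with a ha
    rw [← hG] at ha
    rw [ha, inner_self_eq_norm_sq_to_K]
    norm_cast
  have h4 : ∫ a, ((‖F a‖ ^ 2 : ℝ) : ℂ) ∂μ = ((∫ a, ‖F a‖ ^ 2 ∂μ : ℝ) : ℂ) :=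
    integral_ofReal
  rw [h1, h2, h3, h4]
  simp

lemma exists_bound (μ : Measure Xd) 
    (hadm : ∀ f : Xd → ℂ, Continuous f → HasCompactSupport f → MemLp (𝓕 f) 2 μ)
    (K : Set Xd) (hK : IsCompact K) :
    ∃ C : ℝ, 0 ≤ C ∧ ∀ (h : Xd → ℂ), Continuous h → (∀ x, x ∉ K → h x = 0) →
      ∀ (B : ℝ), (∀ x, ‖h x‖ ≤ B) →
      ∀ (hm : MemLp (𝓕 h) 2 μ), ‖hm.toLp (𝓕 h)‖ ≤ C * B := by
  haveI : Fact ((1:ℝ≥0∞) ≤ 2) := ⟨one_le_two⟩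
  have hcs : ∀ g : suppSM K, HasCompactSupport (((g : Xd →ᵇ ℂ)) : Xd → ℂ) := by
    intro g
    refine hK.of_isClosed_subset isClosed_closure (closure_minimal ?_ hK.isClosed)
    intro x hx
    by_contra hxK
    exact hx (g.2 x hxK)
  have meml : ∀ g : suppSM K, MemLp (𝓕 (((g : Xd →ᵇ ℂ)) : Xd → ℂ)) 2 μ := fun g =>
    hadm _ (g : Xd →ᵇ ℂ).continuous (hcs g)
  have integ : ∀ g : suppSM K, Integrable (((g : Xd →ᵇ ℂ)) : Xd → ℂ) := fun g =>
    (g : Xd →ᵇ ℂ).continuous.integrable_of_hasCompactSupport (hcs g)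
  let T : suppSM K →ₗ[ℂ] Lp ℂ 2 μ :=
    { toFun := fun g => (meml g).toLp _
      map_add' := by
        intro a b
        have h2 : 𝓕 ((((a + b : suppSM K) : Xd →ᵇ ℂ)) : Xd → ℂ)
            = 𝓕 (((a : Xd →ᵇ ℂ)) : Xd → ℂ) + 𝓕 (((b : Xd →ᵇ ℂ)) : Xd → ℂ) := by
          have hfa : ((((a + b : suppSM K) : Xd →ᵇ ℂ)) : Xd → ℂ)
              = (((a : Xd →ᵇ ℂ)) : Xd → ℂ) + (((b : Xd →ᵇ ℂ)) : Xd → ℂ) := by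
            ext v; simp
          rw [hfa]
          exact fourier_add (integ a) (integ b)
        exact (MemLp.toLp_congr _ ((meml a).add (meml b)) (.of_eq h2)).trans
          (MemLp.toLp_add _ _)
      map_smul' := by
        intro c a
        have h2 : 𝓕 ((((c • a : suppSM K) : Xd →ᵇ ℂ)) : Xd → ℂ)
            = c • 𝓕 (((a : Xd →ᵇ ℂ)) : Xd → ℂ) := by
          have hfa : ((((c • a : suppSM K) : Xd →ᵇ ℂ)) : Xd → ℂ)
              = c • (((a : Xd →ᵇ ℂ)) : Xd → ℂ) := by
            ext v; simp
          rw [hfa]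
          exact fourier_smul c _
        simp only [RingHom.id_apply]
        exact (MemLp.toLp_congr (meml (c • a)) ((meml a).const_smul c) (.of_eq h2)).trans
          (MemLp.toLp_const_smul c (meml a)) }
  have hseq : ∀ (u : ℕ → suppSM K) (x : suppSM K) (y : Lp ℂ 2 μ),
      Tendsto u atTop (𝓝 x) → Tendsto (⇑T ∘ u) atTop (𝓝 y) → y = T x := by
    intro u x y hux huy
    have hpt : ∀ w : Xd, Tendsto (fun n => 𝓕 (((u n : Xd →ᵇ ℂ)) : Xd → ℂ) w) atTop
        (𝓝 (𝓕 (((x : Xd →ᵇ ℂ)) : Xd → ℂ) w)) := by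
      intro w
      rw [tendsto_iff_dist_tendsto_zero]
      have hb : ∀ n, dist (𝓕 (((u n : Xd →ᵇ ℂ)) : Xd → ℂ) w)
          (𝓕 (((x : Xd →ᵇ ℂ)) : Xd → ℂ) w) ≤ dist (u n) x * (volume K).toReal := by
        intro n
        have hfa : ((((u n - x : suppSM K) : Xd →ᵇ ℂ)) : Xd → ℂ)
            = (((u n : Xd →ᵇ ℂ)) : Xd → ℂ) - (((x : Xd →ᵇ ℂ)) : Xd → ℂ) := by
          ext v; simp
        have hdd : dist (𝓕 (((u n : Xd →ᵇ ℂ)) : Xd → ℂ) w) (𝓕 (((x : Xd →ᵇ ℂ)) : Xd → ℂ) w)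
            = ‖𝓕 ((((u n - x : suppSM K) : Xd →ᵇ ℂ)) : Xd → ℂ) w‖ := by
          rw [dist_eq_norm, hfa, fourier_sub (integ (u n)) (integ x)]
          rfl
        rw [hdd]
        set D : Xd →ᵇ ℂ := ((u n - x : suppSM K) : Xd →ᵇ ℂ) with hD
        have hb1 : ‖𝓕 (⇑D) w‖ ≤ ∫ v, ‖D v‖ :=
          VectorFourier.norm_fourierIntegral_le_integral_norm _ _ _ _ _
        have hb2 : (∫ v, ‖D v‖) = ∫ v in K, ‖D v‖ :=
          (setIntegral_eq_integral_of_forall_compl_eq_zero fun v hv => by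
            have hz : D v = 0 := (u n - x : suppSM K).2 v hv
            rw [hz, norm_zero]).symm
        have hb3 : (∫ v in K, ‖D v‖) ≤ dist (u n) x * (volume K).toReal := by
          refine le_trans (le_abs_self _) ?_
          rw [← Real.norm_eq_abs]
          refine norm_setIntegral_le_of_norm_le_const_ae' hK.measure_lt_top ?_
          refine ae_of_all _ fun v _ => ?_
          rw [Real.norm_eq_abs, abs_of_nonneg (norm_nonneg _), dist_eq_norm]
          calc ‖D v‖ ≤ ‖D‖ := BoundedContinuousFunction.norm_coe_le_norm _ v
            _ = ‖u n - x‖ := by rw [hD, Submodule.coe_norm]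
        exact hb1.trans (hb2 ▸ hb3)
      refine squeeze_zero (fun n => dist_nonneg) hb ?_
      have := (tendsto_iff_dist_tendsto_zero.mp hux).mul_const ((volume K).toReal)
      simpa using this
    have him : TendstoInMeasure μ (fun n => ⇑(T (u n))) atTop ⇑y :=
      tendstoInMeasure_of_tendsto_Lp huy
    obtain ⟨ns, hns_mono, hae⟩ := him.exists_seq_tendsto_ae
    have hcoe : ∀ᵐ a ∂μ, ∀ n, (T (u n) : Xd → ℂ) a = 𝓕 (((u n : Xd →ᵇ ℂ)) : Xd → ℂ) a :=
      ae_all_iff.2 fun n => (meml (u n)).coeFn_toLp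
    have hxcoe : (T x : Xd → ℂ) =ᵐ[μ] 𝓕 (((x : Xd →ᵇ ℂ)) : Xd → ℂ) := (meml x).coeFn_toLp
    refine MeasureTheory.Lp.ext ?_
    filter_upwards [hae, hcoe, hxcoe] with a h1 h2 h3
    simp only [h2] at h1
    have h4 : Tendsto (fun i => 𝓕 (((u (ns i) : Xd →ᵇ ℂ)) : Xd → ℂ) a) atTop
        (𝓝 (𝓕 (((x : Xd →ᵇ ℂ)) : Xd → ℂ) a)) := (hpt a).comp hns_mono.tendsto_atTop
    rw [h3]
    exact tendsto_nhds_unique h1 h4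
  let T' := ContinuousLinearMap.ofSeqClosedGraph hseq
  refine ⟨‖T'‖, norm_nonneg _, ?_⟩
  intro h hc hsupp B hB hm
  have hB0 : (0:ℝ) ≤ B := le_trans (norm_nonneg (h 0)) (hB 0)
  let gB : Xd →ᵇ ℂ := BoundedContinuousFunction.ofNormedAddCommGroup h hc B hB
  have hmem : gB ∈ suppSM K := fun x hx => hsupp x hx
  have hTg : T' ⟨gB, hmem⟩ = hm.toLp (𝓕 h) := by
    have h0 : T' ⟨gB, hmem⟩ = T ⟨gB, hmem⟩ := rfl
    rw [h0]
    exact MemLp.toLp_congr (meml ⟨gB, hmem⟩) hm (Filter.EventuallyEq.of_eq rfl)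
  rw [← hTg]
  calc ‖T' ⟨gB, hmem⟩‖ ≤ ‖T'‖ * ‖(⟨gB, hmem⟩ : suppSM K)‖ := T'.le_opNorm _
    _ ≤ ‖T'‖ * B := by
        refine mul_le_mul_of_nonneg_left ?_ (norm_nonneg _)
        rw [Submodule.coe_norm]
        exact BoundedContinuousFunction.norm_ofNormedAddCommGroup_le hc hB0 hB

end SapAux

open SapAux

/-- If a positive Radon measure `μ` on `ℝ^d` is weakly admissible, then for every
continuous compactly supported `f : ℝ^d → ℂ` the function `t ↦ ∫ ‖𝓕f(x+t)‖² dμ(x)` is bounded and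
uniformly continuous. -/
theorem fourierTransformable_sap_stmt1 {d : ℕ}
    (μ : Measure (EuclideanSpace ℝ (Fin d))) [μ.Regular]
    (hadm : ∀ f : EuclideanSpace ℝ (Fin d) → ℂ, Continuous f → HasCompactSupport f →
      MemLp (𝓕 f) 2 μ)
    (f : EuclideanSpace ℝ (Fin d) → ℂ) (hf : Continuous f) (hfc : HasCompactSupport f) :
    (∃ C : ℝ, ∀ t : EuclideanSpace ℝ (Fin d), |∫ x, ‖𝓕 f (x + t)‖ ^ 2 ∂μ| ≤ C) ∧
      UniformContinuous (fun t : EuclideanSpace ℝ (Fin d) => ∫ x, ‖𝓕 f (x + t)‖ ^ 2 ∂μ) := by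
  haveI : Fact ((1:ℝ≥0∞) ≤ 2) := ⟨one_le_two⟩
  obtain ⟨C, hC0, hC⟩ := exists_bound μ hadm (tsupport f) hfc
  obtain ⟨R, hR⟩ := hfc.isBounded.subset_closedBall 0
  set R' : ℝ := max R 0 with hR'def
  have hR'0 : (0:ℝ) ≤ R' := le_max_right _ _
  have hR' : tsupport f ⊆ closedBall 0 R' :=
    hR.trans (closedBall_subset_closedBall (le_max_left _ _))
  obtain ⟨x₀, hx₀⟩ := hf.norm.exists_forall_ge_of_hasCompactSupport hfc.norm
  set B : ℝ := ‖f x₀‖ with hBdef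
  have hB : ∀ x, ‖f x‖ ≤ B := hx₀
  have hB0 : (0:ℝ) ≤ B := norm_nonneg _
  set h : EuclideanSpace ℝ (Fin d) → EuclideanSpace ℝ (Fin d) → ℂ :=
    fun t v => 𝐞 (-⟪v, t⟫) • f v with hh
  have hcont : ∀ t, Continuous (h t) := by
    intro t
    exact (Real.continuous_fourierChar.comp
      ((continuous_id.inner continuous_const).neg)).smul hf
  have hsupp : ∀ t x, x ∉ tsupport f → h t x = 0 := by
    intro t x hx
    simp only [hh, image_eq_zero_of_notMem_tsupport hx, smul_zero]
  have hBt : ∀ t v, ‖h t v‖ ≤ B := by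
    intro t v
    simp only [hh, Circle.norm_smul]
    exact hB v
  have hCS : ∀ g : EuclideanSpace ℝ (Fin d) → ℂ, (∀ x, x ∉ tsupport f → g x = 0) →
      HasCompactSupport g := by
    intro g hg
    refine hfc.of_isClosed_subset isClosed_closure
      (closure_minimal ?_ (isClosed_tsupport f))
    intro x hx
    by_contra hxK
    exact hx (hg x hxK)
  have key : ∀ t x, 𝓕 f (x + t) = 𝓕 (h t) x := by
    intro t x
    rw [Real.fourier_eq, Real.fourier_eq]
    refine integral_congr_ae (ae_of_all _ fun v => ?_)
    simp only [hh]
    rw [smul_smul, ← AddChar.map_add_eq_mul, inner_add_right, neg_add]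
  have memF : ∀ t, MemLp (fun x => 𝓕 f (x + t)) 2 μ := by
    intro t
    have he : (fun x => 𝓕 f (x + t)) = 𝓕 (h t) := funext (key t)
    rw [he]
    exact hadm (h t) (hcont t) (hCS (h t) (hsupp t))
  set L : EuclideanSpace ℝ (Fin d) → Lp ℂ 2 μ := fun t => (memF t).toLp _ with hL
  have hint : ∀ t, ∫ x, ‖𝓕 f (x + t)‖ ^ 2 ∂μ = ‖L t‖ ^ 2 := fun t =>
    integral_norm_sq_eq (memF t)
  have hLb : ∀ t, ‖L t‖ ≤ C * B := by
    intro t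
    have he : (fun x => 𝓕 f (x + t)) = 𝓕 (h t) := funext (key t)
    have hm : MemLp (𝓕 (h t)) 2 μ := hadm (h t) (hcont t) (hCS (h t) (hsupp t))
    have h2 : L t = hm.toLp (𝓕 (h t)) := MemLp.toLp_congr _ _ (.of_eq he)
    rw [h2]
    exact hC (h t) (hcont t) (hsupp t) B (hBt t) hm
  have hdiff : ∀ t s, ‖L t - L s‖ ≤ C * (2 * Real.pi * R' * B) * dist t s := by
    intro t s
    have hdsupp : ∀ x, x ∉ tsupport f → h t x - h s x = 0 := by
      intro x hx
      rw [hsupp t x hx, hsupp s x hx, sub_zero]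
    have hdcont : Continuous (fun v => h t v - h s v) := (hcont t).sub (hcont s)
    have hdB : ∀ v, ‖h t v - h s v‖ ≤ 2 * Real.pi * R' * B * dist t s := by
      intro v
      by_cases hv : v ∈ tsupport f
      · have he : h t v - h s v = ((𝐞 (-⟪v, t⟫) : ℂ) - (𝐞 (-⟪v, s⟫) : ℂ)) * f v := by
          simp only [hh, Circle.smul_def, sub_mul, smul_eq_mul]
        rw [he, norm_mul]
        have h1 : ‖(𝐞 (-⟪v, t⟫) : ℂ) - (𝐞 (-⟪v, s⟫) : ℂ)‖
            ≤ 2 * Real.pi * |(-⟪v, t⟫ : ℝ) - (-⟪v, s⟫ : ℝ)| := norm_fourierChar_sub_le _ _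
        have h2 : |(-⟪v, t⟫ : ℝ) - (-⟪v, s⟫ : ℝ)| ≤ R' * dist t s := by
          have he2 : (-⟪v, t⟫ : ℝ) - (-⟪v, s⟫ : ℝ) = ⟪v, s - t⟫ := by
            rw [inner_sub_right]; ring
          rw [he2]
          have hv' : ‖v‖ ≤ R' := by
            simpa [mem_closedBall, dist_zero_right] using hR' hv
          calc |(⟪v, s - t⟫ : ℝ)| ≤ ‖v‖ * ‖s - t‖ := abs_real_inner_le_norm _ _
            _ ≤ R' * dist t s := by
                rw [dist_comm t s, dist_eq_norm]
                exact mul_le_mul_of_nonneg_right hv' (norm_nonneg _)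
        calc ‖(𝐞 (-⟪v, t⟫) : ℂ) - (𝐞 (-⟪v, s⟫) : ℂ)‖ * ‖f v‖
            ≤ (2 * Real.pi * (R' * dist t s)) * B := by
              refine mul_le_mul ?_ (hB v) (norm_nonneg _) (by positivity)
              refine h1.trans ?_
              nlinarith [h2, Real.pi_pos, abs_nonneg ((-⟪v, t⟫ : ℝ) - (-⟪v, s⟫ : ℝ))]
          _ = 2 * Real.pi * R' * B * dist t s := by ring
      · rw [hdsupp v hv, norm_zero]
        positivity
    have hdm : MemLp (𝓕 (fun v => h t v - h s v)) 2 μ :=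
      hadm _ hdcont (hCS _ hdsupp)
    have hintg : ∀ t', Integrable (h t') volume := fun t' =>
      (hcont t').integrable_of_hasCompactSupport (hCS _ (hsupp t'))
    have hfe : (fun x => 𝓕 f (x + t)) - (fun x => 𝓕 f (x + s))
        = 𝓕 (fun v => h t v - h s v) := by
      have h1 : (fun x => 𝓕 f (x + t)) = 𝓕 (h t) := funext (key t)
      have h2 : (fun x => 𝓕 f (x + s)) = 𝓕 (h s) := funext (key s)
      rw [h1, h2, ← fourier_sub (hintg t) (hintg s)]
      rfl
    have hsubL : L t - L s = hdm.toLp _ := by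
      rw [hL]
      refine ((MemLp.toLp_sub (memF t) (memF s)).symm).trans ?_
      exact MemLp.toLp_congr _ _ (.of_eq hfe)
    rw [hsubL]
    have := hC _ hdcont hdsupp (2 * Real.pi * R' * B * dist t s) hdB hdm
    calc ‖hdm.toLp _‖ ≤ C * (2 * Real.pi * R' * B * dist t s) := this
      _ = C * (2 * Real.pi * R' * B) * dist t s := by ring
  constructor
  · refine ⟨(C * B) ^ 2, fun t => ?_⟩
    rw [hint t, abs_of_nonneg (by positivity)]
    exact pow_le_pow_left₀ (norm_nonneg _) (hLb t) 2
  · have hg : (fun t : EuclideanSpace ℝ (Fin d) => ∫ x, ‖𝓕 f (x + t)‖ ^ 2 ∂μ)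
        = fun t => ‖L t‖ ^ 2 := funext hint
    rw [hg]
    set Lc : ℝ := (2 * (C * B)) * (C * (2 * Real.pi * R' * B)) with hLcdef
    have hLc0 : (0:ℝ) ≤ Lc := by positivity
    refine LipschitzWith.uniformContinuous (K := Lc.toNNReal) ?_
    rw [lipschitzWith_iff_dist_le_mul]
    intro t s
    rw [Real.dist_eq, Real.coe_toNNReal _ hLc0]
    have key2 : |‖L t‖ ^ 2 - ‖L s‖ ^ 2| ≤ (‖L t‖ + ‖L s‖) * |‖L t‖ - ‖L s‖| := by
      have he : ‖L t‖ ^ 2 - ‖L s‖ ^ 2 = (‖L t‖ + ‖L s‖) * (‖L t‖ - ‖L s‖) := by ring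
      rw [he, abs_mul, abs_of_nonneg (by positivity : (0:ℝ) ≤ ‖L t‖ + ‖L s‖)]
    refine key2.trans ?_
    have h1 : ‖L t‖ + ‖L s‖ ≤ 2 * (C * B) := by
      have := add_le_add (hLb t) (hLb s); linarith
    have h2 : |‖L t‖ - ‖L s‖| ≤ ‖L t - L s‖ := abs_norm_sub_norm_le _ _
    have h3 : |‖L t‖ - ‖L s‖| ≤ C * (2 * Real.pi * R' * B) * dist t s :=
      h2.trans (hdiff t s)
    calc (‖L t‖ + ‖L s‖) * |‖L t‖ - ‖L s‖|
        ≤ (2 * (C * B)) * (C * (2 * Real.pi * R' * B) * dist t s) :=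
          mul_le_mul h1 h3 (abs_nonneg _) (by positivity)
      _ = Lc * dist t s := by rw [hLcdef]; ring
end
end

section
/- Let 𝓛 ⊂ ℝ^d × ℝ^m be a full-rank lattice such that the projection p₁ onto ℝ^d is injective on 𝓛 and p₂(𝓛) is dense in ℝ^m, and let h : ℝ^m → ℂ be continuous with compact support. Then the weighted Dirac comb ω_h = ∑_{(x,x⋆)∈𝓛} h(x⋆) δ_x is a strongly almost periodic translation bounded measure; explicitly: (a) for every compact K ⊆ ℝ^d, sup_{t ∈ ℝ^d} ∑_{(x,x⋆) ∈ 𝓛, x ∈ t+K} ‖h(x⋆)‖ < ∞; and (b) for every continuous compactly supported f : ℝ^d → ℂ, the function F(t) = ∑_{(x,x⋆)∈𝓛} h(x⋆) f(t−x) is a well-defined (absolutely summable) bounded uniformly continuous function whose set of translates {F(·−s) : s ∈ ℝ^d} is totally bounded in the supremum norm. -/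
open MeasureTheory Metric Filter
open scoped Pointwise FourierTransform RealInnerProductSpace ENNReal Topology

noncomputable section

/-- A bounded continuous function is Bohr (strongly) almost periodic if its set of translates is
totally bounded in the supremum norm (expressed via finite `ε`-nets of translates). -/
def IsBohrAlmostPeriodic {d : ℕ} (F : EuclideanSpace ℝ (Fin d) → ℂ) : Prop :=
  Continuous F ∧ (∃ C : ℝ, ∀ t, ‖F t‖ ≤ C) ∧
    ∀ ε : ℝ, 0 < ε → ∃ S : Finset (EuclideanSpace ℝ (Fin d)),
      ∀ s : EuclideanSpace ℝ (Fin d), ∃ s₀ ∈ S,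
        ∀ t : EuclideanSpace ℝ (Fin d), ‖F (t - s) - F (t - s₀)‖ ≤ ε

section AuxSAP

variable {V : Type*} [NormedAddCommGroup V] [NormedSpace ℝ V] [FiniteDimensional ℝ V]
variable (L : Submodule ℤ V) [DiscreteTopology L] [IsZLattice ℝ L]

/-- Uniform counting lemma: the number of lattice points in any translate of a fixed
compact set is uniformly bounded. -/
lemma sap_count {C : Set V} (hC : IsCompact C) :
    ∃ N : ℕ, ∀ v : V, ∃ s : Finset L, s.card ≤ N ∧ ∀ l : L, (l : V) - v ∈ C → l ∈ s := by
  classical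
  have _i1 : Module.Finite ℤ L := ZLattice.module_finite ℝ L
  have _i2 : Module.Free ℤ L := ZLattice.module_free ℝ L
  set ι := Module.Free.ChooseBasisIndex ℤ L with hι
  set b : Module.Basis ι ℤ L := Module.Free.chooseBasis ℤ L with hb
  set B : Module.Basis ι ℝ V := b.ofZLatticeBasis ℝ L with hB
  have hcont : ∀ i : ι, Continuous fun w : V => B.repr w i := fun i => by
    have : Continuous (B.coord i) := LinearMap.continuous_of_finiteDimensional _
    exact this
  have hbound : ∀ i : ι, ∃ R : ℝ, ∀ c ∈ C, |B.repr c i| ≤ R := by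
    intro i
    obtain ⟨R, hR⟩ := Bornology.IsBounded.exists_norm_le (hC.image (hcont i)).isBounded
    exact ⟨R, fun c hc => by
      simpa [Real.norm_eq_abs] using hR _ (Set.mem_image_of_mem _ hc)⟩
  choose R hR using hbound
  refine ⟨∏ i, (⌊2 * R i⌋ + 1).toNat, fun v => ?_⟩
  set T : Finset (ι → ℤ) :=
    Fintype.piFinset fun i => Finset.Icc ⌈B.repr v i - R i⌉ ⌊B.repr v i + R i⌋ with hT
  have hinj : Function.Injective fun l : L => (fun i => b.repr l i : ι → ℤ) := by
    intro x y hxy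
    exact b.repr.injective (Finsupp.ext fun i => congrFun hxy i)
  refine ⟨T.preimage _ hinj.injOn, ?_, ?_⟩
  · refine le_trans (Finset.card_le_card_of_injOn _
      (fun l hl => Finset.mem_preimage.mp hl) hinj.injOn) ?_
    rw [hT, Fintype.card_piFinset]
    refine Finset.prod_le_prod' fun i _ => ?_
    rw [Int.card_Icc]
    refine Int.toNat_le_toNat ?_
    have h1 : (⌊B.repr v i + R i⌋ : ℝ) ≤ B.repr v i + R i := Int.floor_le _
    have h2 : (B.repr v i - R i : ℝ) ≤ ⌈B.repr v i - R i⌉ := Int.le_ceil _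
    have h3 : (⌊B.repr v i + R i⌋ + 1 - ⌈B.repr v i - R i⌉ : ℝ) ≤ 2 * R i + 1 := by
      push_cast; linarith
    have h5 : ⌊B.repr v i + R i⌋ - ⌈B.repr v i - R i⌉ ≤ ⌊2 * R i⌋ :=
      Int.le_floor.mpr (by push_cast; linarith)
    omega
  · intro l hl
    rw [Finset.mem_preimage, hT, Fintype.mem_piFinset]
    intro i
    rw [Finset.mem_Icc]
    have hcoe : B.repr (l : V) i = ((b.repr l i : ℤ) : ℝ) :=
      Module.Basis.ofZLatticeBasis_repr_apply ℝ L b l i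
    have hsub : B.repr ((l : V) - v) i = B.repr (l : V) i - B.repr v i := by
      rw [map_sub]; rfl
    have habs := abs_le.mp (hR i _ hl)
    rw [hsub] at habs
    constructor
    · exact Int.ceil_le.mpr (by rw [← hcoe]; linarith [habs.1])
    · exact Int.le_floor.mpr (by rw [← hcoe]; linarith [habs.2])

/-- The lattice periodization of `G`. -/
def sapComb (G : V → ℂ) : V → ℂ := fun v => ∑' l : L, G (v - (l : V))

lemma sap_support_finset (G : V → ℂ) (hGc : HasCompactSupport G) (v₀ : V) :
    ∃ s : Finset L, ∀ v : V, dist v v₀ ≤ 1 → ∀ l : L, l ∉ s → G (v - (l : V)) = 0 := by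
  have hCcpt : IsCompact ((-tsupport G : Set V) + closedBall (0 : V) 1) :=
    (IsCompact.neg hGc).add (isCompact_closedBall _ _)
  obtain ⟨N, hN⟩ := sap_count L hCcpt
  obtain ⟨s, -, hs⟩ := hN v₀
  refine ⟨s, fun v hv l hl => ?_⟩
  by_contra hne
  refine hl (hs l ?_)
  have h1 : v - (l : V) ∈ tsupport G := subset_tsupport _ hne
  have h2 : (l : V) - v ∈ (-tsupport G : Set V) := by
    rw [Set.mem_neg]; simpa [neg_sub] using h1
  have h3 : v - v₀ ∈ closedBall (0 : V) 1 := by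
    rw [mem_closedBall_zero_iff]
    simpa [dist_eq_norm] using hv
  have : (l : V) - v₀ = ((l : V) - v) + (v - v₀) := by abel
  rw [this]
  exact Set.add_mem_add h2 h3

lemma sap_summable (G : V → ℂ) (hGc : HasCompactSupport G) (v : V) :
    Summable fun l : L => ‖G (v - (l : V))‖ := by
  obtain ⟨s, hs⟩ := sap_support_finset L G hGc v
  exact summable_of_ne_finset_zero (s := s) fun l hl => by
    rw [hs v (by simp) l hl, norm_zero]

lemma sap_periodic (G : V → ℂ) (l₀ : L) (v : V) :
    sapComb L G (v + (l₀ : V)) = sapComb L G v := by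
  unfold sapComb
  rw [← (Equiv.addRight l₀).tsum_eq (fun l : L => G (v + (l₀ : V) - (l : V)))]
  refine tsum_congr fun l => ?_
  have : v + (l₀ : V) - ((Equiv.addRight l₀) l : V) = v - (l : V) := by
    simp only [Equiv.coe_addRight, Submodule.coe_add]
    abel
  rw [this]

lemma sap_continuous (G : V → ℂ) (hG : Continuous G) (hGc : HasCompactSupport G) :
    Continuous (sapComb L G) := by
  rw [continuous_iff_continuousAt]
  intro v₀
  obtain ⟨s, hs⟩ := sap_support_finset L G hGc v₀
  have hsum : Continuous fun v : V => ∑ l ∈ s, G (v - (l : V)) :=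
    continuous_finset_sum _ fun l _ => hG.comp (continuous_id.sub continuous_const)
  refine hsum.continuousAt.congr ?_
  refine Filter.eventuallyEq_of_mem (ball_mem_nhds v₀ one_pos) fun v hv => ?_
  exact (tsum_eq_sum fun l hl => hs v (le_of_lt (mem_ball.mp hv)) l hl).symm

lemma sap_fund : ∃ D : Set V, IsCompact D ∧ ∀ v : V, ∃ l : L, v + (l : V) ∈ D := by
  have _i1 : Module.Finite ℤ L := ZLattice.module_finite ℝ L
  have _i2 : Module.Free ℤ L := ZLattice.module_free ℝ L
  set b : Module.Basis (Module.Free.ChooseBasisIndex ℤ L) ℤ L := Module.Free.chooseBasis ℤ L with hb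
  set B := b.ofZLatticeBasis ℝ L with hB
  refine ⟨closure (ZSpan.fundamentalDomain B), ?_, fun v => ?_⟩
  · exact Metric.isCompact_of_isClosed_isBounded isClosed_closure
      (ZSpan.fundamentalDomain_isBounded B).closure
  · obtain ⟨u, hu, -⟩ := ZSpan.exist_unique_vadd_mem_fundamentalDomain B v
    have hmem : (u : V) ∈ L := (b.ofZLatticeBasis_span ℝ).le u.2
    refine ⟨⟨(u : V), hmem⟩, subset_closure ?_⟩
    have : u +ᵥ v = v + (u : V) := by
      rw [Submodule.vadd_def, vadd_eq_add, add_comm]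
    rwa [this] at hu

lemma sap_bounded (G : V → ℂ) (hG : Continuous G) (hGc : HasCompactSupport G) :
    ∃ Cb : ℝ, ∀ v : V, ‖sapComb L G v‖ ≤ Cb := by
  obtain ⟨D, hD, hfund⟩ := sap_fund L
  obtain ⟨Cb, hCb⟩ := hD.exists_bound_of_continuousOn (sap_continuous L G hG hGc).continuousOn
  refine ⟨Cb, fun v => ?_⟩
  obtain ⟨l, hl⟩ := hfund v
  calc ‖sapComb L G v‖ = ‖sapComb L G (v + (l : V))‖ := by rw [sap_periodic]
    _ ≤ Cb := hCb _ hl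

lemma sap_uc (G : V → ℂ) (hG : Continuous G) (hGc : HasCompactSupport G) :
    UniformContinuous (sapComb L G) := by
  refine Metric.uniformContinuous_iff.mpr fun ε hε => ?_
  obtain ⟨D, hD, hfund⟩ := sap_fund L
  have hD2 : IsCompact (cthickening 1 D) := hD.cthickening
  have huc := hD2.uniformContinuousOn_of_continuous (sap_continuous L G hG hGc).continuousOn
  rw [Metric.uniformContinuousOn_iff] at huc
  obtain ⟨δ₀, hδ₀, H0⟩ := huc ε hε
  refine ⟨min δ₀ 1, by positivity, fun {a c} hac => ?_⟩
  obtain ⟨l, hl⟩ := hfund a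
  have ha2 : a + (l : V) ∈ cthickening 1 D := self_subset_cthickening _ hl
  have hc2 : c + (l : V) ∈ cthickening 1 D := by
    refine mem_cthickening_of_dist_le _ (a + (l : V)) 1 D hl ?_
    rw [dist_add_right, dist_comm]
    exact le_of_lt (lt_of_lt_of_le hac (min_le_right _ _))
  have hdist : dist (a + (l : V)) (c + (l : V)) < δ₀ := by
    rw [dist_add_right]
    exact lt_of_lt_of_le hac (min_le_left _ _)
  have := H0 _ ha2 _ hc2 hdist
  rwa [sap_periodic, sap_periodic] at this

end AuxSAP

/-- For a Euclidean cut-and-project scheme given by a full-rank lattice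
`L ⊂ ℝ^d × ℝ^m` and `h : ℝ^m → ℂ` continuous with compact support, the weighted Dirac comb
`ω_h = ∑_{(x,x⋆) ∈ L} h(x⋆) δ_x` is translation bounded (a) and strongly almost periodic (b). -/
theorem fourierTransformable_sap_stmt13 {d m : ℕ}
    (L : Submodule ℤ (EuclideanSpace ℝ (Fin d) × EuclideanSpace ℝ (Fin m)))
    [DiscreteTopology L] [IsZLattice ℝ L]
    (hinj : ∀ p q : L, (p : EuclideanSpace ℝ (Fin d) × EuclideanSpace ℝ (Fin m)).1 =
      (q : EuclideanSpace ℝ (Fin d) × EuclideanSpace ℝ (Fin m)).1 → p = q)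
    (hdense : Dense (Prod.snd '' (L : Set (EuclideanSpace ℝ (Fin d) × EuclideanSpace ℝ (Fin m)))))
    (h : EuclideanSpace ℝ (Fin m) → ℂ) (hh : Continuous h) (hhc : HasCompactSupport h) :
    -- (a) translation boundedness of `ω_h`
    (∀ K : Set (EuclideanSpace ℝ (Fin d)), IsCompact K →
      (⨆ t : EuclideanSpace ℝ (Fin d),
        ∑' l : {y : L // (y : EuclideanSpace ℝ (Fin d) × EuclideanSpace ℝ (Fin m)).1
            ∈ (t +ᵥ K : Set (EuclideanSpace ℝ (Fin d)))},
          (‖h (l.1 : EuclideanSpace ℝ (Fin d) × EuclideanSpace ℝ (Fin m)).2‖₊ : ℝ≥0∞)) < ⊤) ∧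
    -- (b) strong almost periodicity of `ω_h`
    (∀ f : EuclideanSpace ℝ (Fin d) → ℂ, Continuous f → HasCompactSupport f →
      (∀ t : EuclideanSpace ℝ (Fin d),
        Summable fun l : L =>
          ‖h (l : EuclideanSpace ℝ (Fin d) × EuclideanSpace ℝ (Fin m)).2
            * f (t - (l : EuclideanSpace ℝ (Fin d) × EuclideanSpace ℝ (Fin m)).1)‖) ∧
      UniformContinuous (fun t : EuclideanSpace ℝ (Fin d) =>
        ∑' l : L, h (l : EuclideanSpace ℝ (Fin d) × EuclideanSpace ℝ (Fin m)).2
          * f (t - (l : EuclideanSpace ℝ (Fin d) × EuclideanSpace ℝ (Fin m)).1)) ∧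
      IsBohrAlmostPeriodic (fun t : EuclideanSpace ℝ (Fin d) =>
        ∑' l : L, h (l : EuclideanSpace ℝ (Fin d) × EuclideanSpace ℝ (Fin m)).2
          * f (t - (l : EuclideanSpace ℝ (Fin d) × EuclideanSpace ℝ (Fin m)).1))) := by
  classical
  constructor
  · -- (a) translation boundedness
    intro K hK
    obtain ⟨Ch, hCh⟩ := hh.bounded_above_of_compact_support hhc
    obtain ⟨N, hN⟩ := sap_count L (hK.prod hhc)
    have hbound : ∀ t : EuclideanSpace ℝ (Fin d),
        (∑' l : {y : L // (y : EuclideanSpace ℝ (Fin d) × EuclideanSpace ℝ (Fin m)).1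
            ∈ (t +ᵥ K : Set (EuclideanSpace ℝ (Fin d)))},
          (‖h (l.1 : EuclideanSpace ℝ (Fin d) × EuclideanSpace ℝ (Fin m)).2‖₊ : ℝ≥0∞))
          ≤ (N : ℝ≥0∞) * ENNReal.ofReal Ch := by
      intro t
      obtain ⟨s, hcard, hs⟩ := hN ((t, 0) : EuclideanSpace ℝ (Fin d) × EuclideanSpace ℝ (Fin m))
      set A : Set L := {y : L | (y : EuclideanSpace ℝ (Fin d) × EuclideanSpace ℝ (Fin m)).1
          ∈ (t +ᵥ K : Set (EuclideanSpace ℝ (Fin d)))} with hA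
      set g : L → ℝ≥0∞ :=
        fun y => (‖h (y : EuclideanSpace ℝ (Fin d) × EuclideanSpace ℝ (Fin m)).2‖₊ : ℝ≥0∞)
        with hg
      refine le_trans (le_of_eq (tsum_subtype A g)) ?_
      have hvanish : ∀ y : L, y ∉ s → A.indicator g y = 0 := by
        intro y hy
        rw [Set.indicator_apply_eq_zero]
        intro hyA
        by_contra hne
        refine hy (hs y ?_)
        have hyW : (y : EuclideanSpace ℝ (Fin d) × EuclideanSpace ℝ (Fin m)).2 ∈ tsupport h :=
          subset_tsupport _ (fun h0 => hne (by simp [hg, h0]))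
        have hyK : (y : EuclideanSpace ℝ (Fin d) × EuclideanSpace ℝ (Fin m)).1 - t ∈ K := by
          have h2 := hyA
          rw [hA, Set.mem_setOf_eq, Set.mem_vadd_set_iff_neg_vadd_mem, vadd_eq_add,
            neg_add_eq_sub] at h2
          exact h2
        rw [Set.mem_prod]
        exact ⟨by simpa using hyK, by simpa using hyW⟩
      rw [tsum_eq_sum hvanish]
      refine le_trans (Finset.sum_le_card_nsmul s _ (ENNReal.ofReal Ch) fun y _ => ?_) ?_
      · by_cases hyA : y ∈ A
        · rw [Set.indicator_of_mem hyA]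
          simp only [hg]
          rw [← ENNReal.ofReal_coe_nnreal, coe_nnnorm]
          exact ENNReal.ofReal_le_ofReal (hCh _)
        · simp [Set.indicator_of_notMem hyA]
      · rw [nsmul_eq_mul]
        exact mul_le_mul_left (by exact_mod_cast hcard) _
    refine lt_of_le_of_lt (iSup_le hbound) ?_
    exact ENNReal.mul_lt_top (by simp) (by simp)
  · -- (b) strong almost periodicity
    intro f hf hfc
    set G : EuclideanSpace ℝ (Fin d) × EuclideanSpace ℝ (Fin m) → ℂ :=
      fun w => h (-w.2) * f w.1 with hGdef
    have hG : Continuous G := (hh.comp continuous_snd.neg).mul (hf.comp continuous_fst)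
    have hGc : HasCompactSupport G := by
      refine HasCompactSupport.intro (hfc.prod (IsCompact.neg hhc)) fun w hw => ?_
      by_contra hne
      refine hw (Set.mem_prod.mpr ⟨?_, ?_⟩)
      · exact subset_tsupport _ fun h0 => hne (by simp [hGdef, h0])
      · exact Set.mem_neg.mpr (subset_tsupport _ fun h0 => hne (by simp [hGdef, h0]))
    have hptw : ∀ (t : EuclideanSpace ℝ (Fin d)) (l : L),
        h (l : EuclideanSpace ℝ (Fin d) × EuclideanSpace ℝ (Fin m)).2
          * f (t - (l : EuclideanSpace ℝ (Fin d) × EuclideanSpace ℝ (Fin m)).1)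
        = G (((t, 0) : EuclideanSpace ℝ (Fin d) × EuclideanSpace ℝ (Fin m))
            - (l : EuclideanSpace ℝ (Fin d) × EuclideanSpace ℝ (Fin m))) := by
      intro t l
      simp [hGdef, Prod.fst_sub, Prod.snd_sub, zero_sub, neg_neg]
    have hFeq : (fun t : EuclideanSpace ℝ (Fin d) =>
          ∑' l : L, h (l : EuclideanSpace ℝ (Fin d) × EuclideanSpace ℝ (Fin m)).2
            * f (t - (l : EuclideanSpace ℝ (Fin d) × EuclideanSpace ℝ (Fin m)).1))
        = fun t : EuclideanSpace ℝ (Fin d) =>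
            sapComb L G ((t, 0) : EuclideanSpace ℝ (Fin d) × EuclideanSpace ℝ (Fin m)) := by
      funext t
      exact tsum_congr fun l => hptw t l
    refine ⟨?_, ?_, ?_⟩
    · -- summability
      intro t
      refine Summable.congr
        (sap_summable L G hGc ((t, 0) : EuclideanSpace ℝ (Fin d) × EuclideanSpace ℝ (Fin m)))
        fun l => ?_
      rw [hptw t l]
    · -- uniform continuity
      rw [hFeq]
      exact (sap_uc L G hG hGc).comp (uniformContinuous_id.prodMk uniformContinuous_const)
    · -- Bohr almost periodicity
      rw [hFeq]
      refine ⟨?_, ?_, ?_⟩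
      · exact (sap_continuous L G hG hGc).comp (continuous_id.prodMk continuous_const)
      · obtain ⟨Cb, hCb⟩ := sap_bounded L G hG hGc
        exact ⟨Cb, fun t => hCb _⟩
      · intro ε hε
        obtain ⟨δ, hδ, Huc⟩ := Metric.uniformContinuous_iff.mp (sap_uc L G hG hGc) ε hε
        obtain ⟨D, hD, hfund⟩ := sap_fund L
        set U : EuclideanSpace ℝ (Fin d) →
            Set (EuclideanSpace ℝ (Fin d) × EuclideanSpace ℝ (Fin m)) :=
          fun u => ⋃ l : L,
            ball (((u, 0) : EuclideanSpace ℝ (Fin d) × EuclideanSpace ℝ (Fin m))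
              + (l : EuclideanSpace ℝ (Fin d) × EuclideanSpace ℝ (Fin m))) (δ/2) with hU
        have hUopen : ∀ u, IsOpen (U u) := fun u => isOpen_iUnion fun l => isOpen_ball
        have hcover : D ⊆ ⋃ u : EuclideanSpace ℝ (Fin d), U u := by
          intro x hx
          have hx2 : x.2 ∈ closure (Prod.snd ''
              (L : Set (EuclideanSpace ℝ (Fin d) × EuclideanSpace ℝ (Fin m)))) := hdense _
          obtain ⟨y, hyL, hy⟩ := Metric.mem_closure_iff.mp hx2 (δ/2) (by positivity)
          obtain ⟨lv, hlvL, hlv⟩ := hyL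
          refine Set.mem_iUnion.mpr ⟨x.1 - lv.1, Set.mem_iUnion.mpr ⟨⟨lv, hlvL⟩, ?_⟩⟩
          have hpe : ((x.1 - lv.1, 0) : EuclideanSpace ℝ (Fin d) × EuclideanSpace ℝ (Fin m))
              + lv = (x.1, y) := by
            have := hlv
            apply Prod.ext
            · simp
            · simp [hlv]
          rw [mem_ball, hpe, Prod.dist_eq]
          refine max_lt ?_ hy
          rw [dist_self]
          positivity
        obtain ⟨S, hS⟩ := hD.elim_finite_subcover U hUopen hcover
        refine ⟨S, fun s => ?_⟩
        obtain ⟨l₀, hl₀⟩ :=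
          hfund ((s, 0) : EuclideanSpace ℝ (Fin d) × EuclideanSpace ℝ (Fin m))
        obtain ⟨u, huS, hmem⟩ := Set.mem_iUnion₂.mp (hS hl₀)
        obtain ⟨l, hl⟩ := Set.mem_iUnion.mp hmem
        refine ⟨u, huS, fun t => ?_⟩
        have hkey : dist
            (((t - s, 0) : EuclideanSpace ℝ (Fin d) × EuclideanSpace ℝ (Fin m))
              + ((l - l₀ : L) : EuclideanSpace ℝ (Fin d) × EuclideanSpace ℝ (Fin m)))
            (((t - u, 0) : EuclideanSpace ℝ (Fin d) × EuclideanSpace ℝ (Fin m))) < δ := by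
          have hd0 := mem_ball.mp hl
          rw [dist_eq_norm] at hd0 ⊢
          have hveq : ((t - s, 0) : EuclideanSpace ℝ (Fin d) × EuclideanSpace ℝ (Fin m))
              + ((l - l₀ : L) : EuclideanSpace ℝ (Fin d) × EuclideanSpace ℝ (Fin m))
              - ((t - u, 0) : EuclideanSpace ℝ (Fin d) × EuclideanSpace ℝ (Fin m))
              = -((((s, 0) : EuclideanSpace ℝ (Fin d) × EuclideanSpace ℝ (Fin m))
                  + (l₀ : EuclideanSpace ℝ (Fin d) × EuclideanSpace ℝ (Fin m)))
                - (((u, 0) : EuclideanSpace ℝ (Fin d) × EuclideanSpace ℝ (Fin m))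
                  + (l : EuclideanSpace ℝ (Fin d) × EuclideanSpace ℝ (Fin m)))) := by
            rw [AddSubgroupClass.coe_sub]
            have h1 : ((t - s, 0) : EuclideanSpace ℝ (Fin d) × EuclideanSpace ℝ (Fin m))
                = ((t, 0) : EuclideanSpace ℝ (Fin d) × EuclideanSpace ℝ (Fin m))
                  - ((s, 0) : EuclideanSpace ℝ (Fin d) × EuclideanSpace ℝ (Fin m)) := by
              rw [Prod.mk_sub_mk, sub_zero]
            have h2 : ((t - u, 0) : EuclideanSpace ℝ (Fin d) × EuclideanSpace ℝ (Fin m))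
                = ((t, 0) : EuclideanSpace ℝ (Fin d) × EuclideanSpace ℝ (Fin m))
                  - ((u, 0) : EuclideanSpace ℝ (Fin d) × EuclideanSpace ℝ (Fin m)) := by
              rw [Prod.mk_sub_mk, sub_zero]
            rw [h1, h2]
            abel
          rw [hveq, norm_neg]
          linarith
        have hfin := Huc hkey
        rw [sap_periodic] at hfin
        rw [dist_eq_norm] at hfin
        exact le_of_lt hfin
end
end

section
/- Let ρ be a positive Radon measure on ℝ^d which is weakly admissible, i.e., for every continuous compactly supported f : ℝ^d → ℂ the Fourier transform 𝓕f lies in L²(ρ), and let g : ℝ^d → ℂ be a bounded measurable function. Then for every continuous compactly supported f : ℝ^d → ℂ, the function h : ℝ^d → ℂ defined by h(t) = ∫_{ℝ^d} ‖𝓕f(x+t)‖² g(x) dρ(x) is well defined, bounded, and uniformly continuous on ℝ^d. -/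
open MeasureTheory Metric Filter
open scoped Pointwise FourierTransform RealInnerProductSpace ENNReal Topology BoundedContinuousFunction

noncomputable section

open Real in
lemma norm_cexp_I_sub_cexp_I_le (a b : ℝ) :
    ‖Complex.exp (a * Complex.I) - Complex.exp (b * Complex.I)‖ ≤ ‖a - b‖ := by
  have hder : ∀ x ∈ (Set.univ : Set ℝ), HasDerivWithinAt
      (fun θ : ℝ => Complex.exp (θ * Complex.I))
      (Complex.exp ((x : ℂ) * Complex.I) * Complex.I) Set.univ x := by
    intro x _
    have h1 : HasDerivAt (fun θ : ℝ => (θ : ℂ) * Complex.I) Complex.I x := by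
      simpa using (Complex.ofRealCLM.hasDerivAt (x := x)).mul_const Complex.I
    exact h1.cexp.hasDerivWithinAt
  have := convex_univ.norm_image_sub_le_of_norm_hasDerivWithin_le hder
    (fun x _ => by
      rw [norm_mul, Complex.norm_exp_ofReal_mul_I,
        Complex.norm_I, one_mul])
    (Set.mem_univ b) (Set.mem_univ a)
  simpa using this

open Real in
lemma norm_fourierChar_sub_le (a b : ℝ) :
    ‖(𝐞 a : ℂ) - (𝐞 b : ℂ)‖ ≤ 2 * π * |a - b| := by
  rw [Real.fourierChar_apply, Real.fourierChar_apply]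
  have := norm_cexp_I_sub_cexp_I_le (2 * π * a) (2 * π * b)
  have h2 : ‖2 * π * a - 2 * π * b‖ = 2 * π * |a - b| := by
    rw [Real.norm_eq_abs, ← mul_sub, abs_mul, abs_of_nonneg (by positivity : (0:ℝ) ≤ 2 * π)]
  rw [h2] at this
  exact this

lemma conj_mul_mul_eq (a b : ℂ) :
    (starRingEnd ℂ) a * (b * a) = (‖a‖ : ℂ) ^ 2 * b := by
  have h : a * (starRingEnd ℂ) a = (‖a‖ : ℂ) ^ 2 := by
    rw [Complex.mul_conj, Complex.normSq_eq_norm_sq]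
    push_cast
    ring
  calc (starRingEnd ℂ) a * (b * a) = a * (starRingEnd ℂ) a * b := by ring
    _ = (‖a‖ : ℂ) ^ 2 * b := by rw [h]

set_option maxHeartbeats 2000000 in
/-- Let `ρ` be a weakly admissible positive Radon measure on `ℝ^d` and
`g : ℝ^d → ℂ` a bounded measurable function. Then for every continuous compactly supported
`f : ℝ^d → ℂ`, the function `h(t) = ∫ ‖𝓕f(x+t)‖² g(x) dρ(x)` is well defined (the integrand is
`ρ`-integrable for every `t`), bounded, and uniformly continuous. -/
theorem fourierTransformable_sap_stmt16 {d : ℕ}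
    (ρ : Measure (EuclideanSpace ℝ (Fin d))) [ρ.Regular]
    (hadm : ∀ f : EuclideanSpace ℝ (Fin d) → ℂ, Continuous f → HasCompactSupport f →
      MemLp (𝓕 f) 2 ρ)
    (g : EuclideanSpace ℝ (Fin d) → ℂ) (hgm : Measurable g)
    (hgb : ∃ C : ℝ, ∀ x, ‖g x‖ ≤ C) :
    ∀ f : EuclideanSpace ℝ (Fin d) → ℂ, Continuous f → HasCompactSupport f →
      (∀ t : EuclideanSpace ℝ (Fin d),
        Integrable (fun x => (‖𝓕 f (x + t)‖ ^ 2 : ℂ) * g x) ρ) ∧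
      (∃ C : ℝ, ∀ t : EuclideanSpace ℝ (Fin d),
        ‖∫ x, (‖𝓕 f (x + t)‖ ^ 2 : ℂ) * g x ∂ρ‖ ≤ C) ∧
      UniformContinuous (fun t : EuclideanSpace ℝ (Fin d) =>
        ∫ x, (‖𝓕 f (x + t)‖ ^ 2 : ℂ) * g x ∂ρ) := by
  classical
  intro f hfc hfs
  obtain ⟨C₀, hC₀⟩ := hgb
  set Cg : ℝ := max C₀ 0 with hCgdef
  have hCg : ∀ x, ‖g x‖ ≤ Cg := fun x => (hC₀ x).trans (le_max_left _ _)
  have hCg0 : 0 ≤ Cg := le_max_right _ _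
  haveI : Fact ((1 : ℝ≥0∞) ≤ 2) := ⟨one_le_two⟩
  have hfi : Integrable f := hfc.integrable_of_hasCompactSupport hfs
  -- multiplication by `f`
  set P : (EuclideanSpace ℝ (Fin d) →ᵇ ℂ) → EuclideanSpace ℝ (Fin d) → ℂ :=
    fun u x => u x * f x with hPdef
  have hPc : ∀ u, Continuous (P u) := fun u => u.continuous.mul hfc
  have hPs : ∀ u, HasCompactSupport (P u) := fun u => hfs.mul_left
  have hPi : ∀ u, Integrable (P u) := fun u =>
    (hPc u).integrable_of_hasCompactSupport (hPs u)
  have hPm : ∀ u, MemLp (𝓕 (P u)) 2 ρ := fun u => hadm _ (hPc u) (hPs u)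
  have hL : Continuous fun p : (EuclideanSpace ℝ (Fin d)) × (EuclideanSpace ℝ (Fin d)) =>
      (innerₗ (EuclideanSpace ℝ (Fin d))) p.1 p.2 := continuous_inner
  have hFadd : ∀ (φ ψ : EuclideanSpace ℝ (Fin d) → ℂ), Integrable φ → Integrable ψ →
      𝓕 (φ + ψ) = 𝓕 φ + 𝓕 ψ := fun φ ψ hφ hψ =>
    VectorFourier.fourierIntegral_add Real.continuous_fourierChar hL hφ hψ
  -- the linear map
  set T₀ : (EuclideanSpace ℝ (Fin d) →ᵇ ℂ) →ₗ[ℂ] Lp ℂ 2 ρ :=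
    { toFun := fun u => ((hPm u).toLp _)
      map_add' := by
        intro u v
        have hPadd : P (u + v) = P u + P v := funext fun x => by
          simp only [hPdef, BoundedContinuousFunction.coe_add, Pi.add_apply]
          ring
        have he : 𝓕 (P (u + v)) = 𝓕 (P u) + 𝓕 (P v) := by
          rw [hPadd]; exact hFadd _ _ (hPi u) (hPi v)
        rw [← MemLp.toLp_add (hPm u) (hPm v)]
        exact MemLp.toLp_congr (hPm (u + v)) ((hPm u).add (hPm v)) (by rw [he])
      map_smul' := by
        intro c u
        have hPsmul : P (c • u) = c • P u := funext fun x => by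
          simp only [hPdef, BoundedContinuousFunction.coe_smul, Pi.smul_apply, smul_eq_mul]
          ring
        have he : 𝓕 (P (c • u)) = c • 𝓕 (P u) := by
          rw [hPsmul]; exact VectorFourier.fourierIntegral_const_smul _ _ _ _ _
        rw [RingHom.id_apply, ← MemLp.toLp_const_smul c (hPm u)]
        exact MemLp.toLp_congr (hPm (c • u)) ((hPm u).const_smul c) (by rw [he]) } with hT₀def
  -- closed graph
  have hT₀closed : ∀ (u : ℕ → EuclideanSpace ℝ (Fin d) →ᵇ ℂ) (x y),
      Tendsto u atTop (𝓝 x) → Tendsto (⇑T₀ ∘ u) atTop (𝓝 y) → y = T₀ x := by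
    intro u x y hux huy
    have hnorm0 : Tendsto (fun n => ‖u n - x‖) atTop (𝓝 0) :=
      tendsto_iff_norm_sub_tendsto_zero.mp hux
    have hptwise : ∀ z, Tendsto (fun n => 𝓕 (P (u n)) z) atTop (𝓝 (𝓕 (P x) z)) := by
      intro z
      rw [tendsto_iff_norm_sub_tendsto_zero]
      have hb : ∀ n, ‖𝓕 (P (u n)) z - 𝓕 (P x) z‖ ≤ ‖u n - x‖ * ∫ v, ‖f v‖ := by
        intro n
        have hsplit : P (u n) = P (u n - x) + P x := funext fun v => by
          simp only [hPdef, BoundedContinuousFunction.coe_sub, Pi.sub_apply, Pi.add_apply]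
          ring
        have he : 𝓕 (P (u n)) = 𝓕 (P (u n - x)) + 𝓕 (P x) := by
          rw [hsplit]; exact hFadd _ _ (hPi _) (hPi _)
        rw [he, Pi.add_apply, add_sub_cancel_right]
        refine (VectorFourier.norm_fourierIntegral_le_integral_norm _ _ _ _ _).trans ?_
        rw [← integral_const_mul]
        refine integral_mono ((hPi _).norm) (hfi.norm.const_mul _) fun v => ?_
        show ‖(u n - x) v * f v‖ ≤ ‖u n - x‖ * ‖f v‖
        rw [norm_mul]
        exact mul_le_mul_of_nonneg_right
          ((BoundedContinuousFunction.norm_coe_le_norm _ v)) (norm_nonneg _)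
      refine squeeze_zero (fun n => norm_nonneg _) hb ?_
      simpa using hnorm0.mul_const (∫ v, ‖f v‖)
    have hLp : Tendsto (fun n => eLpNorm (⇑(T₀ (u n)) - ⇑y) 2 ρ) atTop (𝓝 0) :=
      (MeasureTheory.Lp.tendsto_Lp_iff_tendsto_eLpNorm' (fun n => T₀ (u n)) y).mp huy
    have hmeas' : TendstoInMeasure ρ (fun n => ⇑(T₀ (u n))) atTop ⇑y :=
      tendstoInMeasure_of_tendsto_eLpNorm (by norm_num)
        (fun n => MeasureTheory.Lp.aestronglyMeasurable _)
        (MeasureTheory.Lp.aestronglyMeasurable _) hLp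
    obtain ⟨ns, hns, hae⟩ := hmeas'.exists_seq_tendsto_ae
    have hcoe : ∀ᵐ z ∂ρ, ∀ n, (T₀ (u n) : EuclideanSpace ℝ (Fin d) → ℂ) z = 𝓕 (P (u n)) z :=
      ae_all_iff.mpr fun n => MemLp.coeFn_toLp (hPm (u n))
    have hxe : (T₀ x : EuclideanSpace ℝ (Fin d) → ℂ) =ᵐ[ρ] 𝓕 (P x) := MemLp.coeFn_toLp (hPm x)
    refine MeasureTheory.Lp.ext ?_
    filter_upwards [hae, hcoe, hxe] with z h1 h2 h3
    have h1' : Tendsto (fun i => 𝓕 (P (u (ns i))) z) atTop (𝓝 (y z)) :=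
      h1.congr fun i => h2 (ns i)
    have h2' : Tendsto (fun i => 𝓕 (P (u (ns i))) z) atTop (𝓝 (𝓕 (P x) z)) :=
      (hptwise z).comp hns.tendsto_atTop
    rw [h3]
    exact tendsto_nhds_unique h1' h2'
  set T : (EuclideanSpace ℝ (Fin d) →ᵇ ℂ) →L[ℂ] Lp ℂ 2 ρ :=
    ContinuousLinearMap.ofSeqClosedGraph hT₀closed with hTdef
  have hT_apply : ∀ u, T u = T₀ u := fun u => by
    rw [hTdef, ContinuousLinearMap.coeFn_ofSeqClosedGraph]
  -- cutoff function
  obtain ⟨χ, hχ1, -, hχs, hχmem⟩ :=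
    exists_continuous_one_zero_of_isCompact hfs isClosed_empty (Set.disjoint_empty _)
  obtain ⟨R₀, hR₀⟩ := hχs.isBounded.subset_closedBall (0 : EuclideanSpace ℝ (Fin d))
  set R : ℝ := max R₀ 0 with hRdef
  have hR0 : 0 ≤ R := le_max_right _ _
  have hRsub : tsupport χ ⊆ closedBall (0 : EuclideanSpace ℝ (Fin d)) R :=
    hR₀.trans (closedBall_subset_closedBall (le_max_left _ _))
  -- the modulation characters as bounded continuous functions
  have hbcfc : ∀ t : EuclideanSpace ℝ (Fin d),
      Continuous fun x : EuclideanSpace ℝ (Fin d) => ((𝐞 (-⟪x, t⟫) : Circle) : ℂ) := fun t =>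
    continuous_subtype_val.comp
      (Real.continuous_fourierChar.comp ((continuous_id.inner continuous_const).neg))
  set bcf : EuclideanSpace ℝ (Fin d) → (EuclideanSpace ℝ (Fin d) →ᵇ ℂ) := fun t =>
    BoundedContinuousFunction.ofNormedAddCommGroup _ (hbcfc t) 1 (fun x => le_of_eq (Circle.norm_coe _)) with hbcfdef
  have hbcf_apply : ∀ t x, bcf t x = ((𝐞 (-⟪x, t⟫) : Circle) : ℂ) := fun t x => rfl
  have hbcf_norm : ∀ t, ‖bcf t‖ ≤ 1 := fun t =>
    BoundedContinuousFunction.norm_ofNormedAddCommGroup_le _ zero_le_one _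
  -- the key modulation identity
  have hFl : ∀ t z, 𝓕 (P (bcf t)) z = 𝓕 f (z + t) := by
    intro t z
    rw [Real.fourier_eq, Real.fourier_eq]
    refine congrArg (integral volume) (funext fun v => ?_)
    show 𝐞 (-⟪v, z⟫) • (bcf t v * f v) = 𝐞 (-⟪v, z + t⟫) • f v
    rw [hbcf_apply, Circle.smul_def, Circle.smul_def, inner_add_right, neg_add,
      AddChar.map_add_eq_mul, Circle.coe_mul]
    simp only [smul_eq_mul]
    ring
  -- basic function-level objects
  have hFlc : ∀ t, Continuous (𝓕 (P (bcf t))) := fun t =>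
    VectorFourier.fourierIntegral_continuous Real.continuous_fourierChar hL (hPi (bcf t))
  have hΨm : ∀ t, MemLp (fun x => g x * 𝓕 (P (bcf t)) x) 2 ρ := fun t =>
    MemLp.of_le_mul (hPm (bcf t))
      (hgm.aestronglyMeasurable.mul (hFlc t).aestronglyMeasurable)
      (ae_of_all _ fun x => by
        rw [norm_mul]
        exact mul_le_mul_of_nonneg_right (hCg x) (norm_nonneg _))
  set Φ : EuclideanSpace ℝ (Fin d) → Lp ℂ 2 ρ := fun t => (hPm (bcf t)).toLp _ with hΦdef
  set Ψ : EuclideanSpace ℝ (Fin d) → Lp ℂ 2 ρ := fun t => (hΨm t).toLp _ with hΨdef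
  have hΦT : ∀ t, Φ t = T (bcf t) := fun t => (hT_apply (bcf t)).symm
  have hΦnorm : ∀ t, ‖Φ t‖ ≤ ‖T‖ := by
    intro t
    rw [hΦT t]
    calc ‖T (bcf t)‖ ≤ ‖T‖ * ‖bcf t‖ := T.le_opNorm _
      _ ≤ ‖T‖ * 1 := mul_le_mul_of_nonneg_left (hbcf_norm t) (norm_nonneg _)
      _ = ‖T‖ := mul_one _
  -- comparison of `eLpNorm`s
  have hcomp : ∀ (φ ψ : EuclideanSpace ℝ (Fin d) → ℂ), MemLp φ 2 ρ →
      (∀ᵐ x ∂ρ, ‖ψ x‖ ≤ Cg * ‖φ x‖) →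
      (eLpNorm ψ 2 ρ).toReal ≤ Cg * (eLpNorm φ 2 ρ).toReal := by
    intro φ ψ hφ hb
    have h1 := eLpNorm_le_mul_eLpNorm_of_ae_le_mul hb 2
    have h2 : (ENNReal.ofReal Cg * eLpNorm φ 2 ρ) ≠ ∞ :=
      ENNReal.mul_ne_top ENNReal.ofReal_ne_top hφ.2.ne
    calc (eLpNorm ψ 2 ρ).toReal ≤ (ENNReal.ofReal Cg * eLpNorm φ 2 ρ).toReal :=
          ENNReal.toReal_mono h2 h1
      _ = Cg * (eLpNorm φ 2 ρ).toReal := by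
          rw [ENNReal.toReal_mul, ENNReal.toReal_ofReal hCg0]
  have hΨnorm : ∀ t, ‖Ψ t‖ ≤ Cg * ‖Φ t‖ := by
    intro t
    rw [hΨdef, hΦdef]
    rw [MeasureTheory.Lp.norm_toLp, MeasureTheory.Lp.norm_toLp]
    refine hcomp _ _ (hPm (bcf t)) (ae_of_all _ fun x => ?_)
    rw [norm_mul]
    exact mul_le_mul_of_nonneg_right (hCg x) (norm_nonneg _)
  have hΦsub_eq : ∀ t s, ‖Φ t - Φ s‖ = (eLpNorm (𝓕 (P (bcf t)) - 𝓕 (P (bcf s))) 2 ρ).toReal := by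
    intro t s
    rw [hΦdef]
    rw [← MemLp.toLp_sub, MeasureTheory.Lp.norm_toLp]
  have hΨsub : ∀ t s, ‖Ψ t - Ψ s‖ ≤ Cg * ‖Φ t - Φ s‖ := by
    intro t s
    rw [hΨdef, ← MemLp.toLp_sub, MeasureTheory.Lp.norm_toLp, hΦsub_eq t s]
    refine hcomp _ _ ((hPm (bcf t)).sub (hPm (bcf s))) (ae_of_all _ fun x => ?_)
    simp only [Pi.sub_apply]
    rw [← mul_sub, norm_mul]
    exact mul_le_mul_of_nonneg_right (hCg x) (norm_nonneg _)
  -- the key integral formula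
  have hkey : ∀ t, (∫ x, (‖𝓕 f (x + t)‖ ^ 2 : ℂ) * g x ∂ρ) = (inner ℂ (Φ t) (Ψ t) : ℂ) := by
    intro t
    rw [hΦdef, hΨdef, MeasureTheory.L2.inner_def]
    refine (integral_congr_ae ?_).symm
    filter_upwards [MemLp.coeFn_toLp (hPm (bcf t)), MemLp.coeFn_toLp (hΨm t)] with x h1 h2
    rw [h1, h2, RCLike.inner_apply', conj_mul_mul_eq, hFl t x]
  refine ⟨?_, ?_, ?_⟩
  · -- integrability
    intro t
    have hsq : Integrable (fun x => ‖𝓕 (P (bcf t)) x‖ ^ 2) ρ := (hPm (bcf t)).norm.integrable_sq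
    have heq : (fun x => (‖𝓕 f (x + t)‖ ^ 2 : ℂ) * g x)
        = fun x => (‖𝓕 (P (bcf t)) x‖ ^ 2 : ℂ) * g x := by
      funext x; rw [hFl t x]
    rw [heq]
    refine Integrable.mono' (hsq.const_mul Cg)
      (((Complex.continuous_ofReal.comp (hFlc t).norm).pow 2).aestronglyMeasurable.mul
        hgm.aestronglyMeasurable) (ae_of_all _ fun x => ?_)
    rw [norm_mul, norm_pow, Complex.norm_real, norm_norm]
    calc ‖𝓕 (P (bcf t)) x‖ ^ 2 * ‖g x‖ ≤ ‖𝓕 (P (bcf t)) x‖ ^ 2 * Cg :=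
          mul_le_mul_of_nonneg_left (hCg x) (by positivity)
      _ = Cg * ‖𝓕 (P (bcf t)) x‖ ^ 2 := mul_comm _ _
  · -- boundedness
    refine ⟨‖T‖ * (Cg * ‖T‖), fun t => ?_⟩
    rw [hkey t]
    calc ‖(inner ℂ (Φ t) (Ψ t) : ℂ)‖ ≤ ‖Φ t‖ * ‖Ψ t‖ := norm_inner_le_norm _ _
      _ ≤ ‖T‖ * (Cg * ‖T‖) :=
          mul_le_mul (hΦnorm t)
            ((hΨnorm t).trans (mul_le_mul_of_nonneg_left (hΦnorm t) hCg0))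
            (norm_nonneg _) (norm_nonneg _)
  · -- uniform continuity
    have hΦlip : ∀ t s : EuclideanSpace ℝ (Fin d),
        ‖Φ t - Φ s‖ ≤ ‖T‖ * (2 * Real.pi * R * dist t s) := by
      intro t s
      have hwc : Continuous fun x : EuclideanSpace ℝ (Fin d) =>
          (bcf t x - bcf s x) * (χ x : ℂ) :=
        ((hbcfc t).sub (hbcfc s)).mul (Complex.continuous_ofReal.comp χ.continuous)
      have hwb : ∀ x, ‖(bcf t x - bcf s x) * (χ x : ℂ)‖ ≤ 2 * Real.pi * R * dist t s := by
        intro x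
        rw [norm_mul]
        by_cases hx : χ x = 0
        · rw [hx]
          simp only [Complex.ofReal_zero, norm_zero, mul_zero]
          positivity
        · have hmem : x ∈ closedBall (0 : EuclideanSpace ℝ (Fin d)) R :=
            hRsub (subset_tsupport χ (Function.mem_support.mpr hx))
          have hxn : ‖x‖ ≤ R := by simpa [mem_closedBall, dist_zero_right] using hmem
          have h1 : ‖bcf t x - bcf s x‖ ≤ 2 * Real.pi * (R * dist t s) := by
            rw [hbcf_apply, hbcf_apply]
            refine (norm_fourierChar_sub_le _ _).trans ?_
            have habs : |(-⟪x, t⟫) - (-⟪x, s⟫)| = |⟪x, s - t⟫| := by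
              rw [inner_sub_right]; ring_nf
            rw [habs]
            refine mul_le_mul_of_nonneg_left ?_ (by positivity)
            calc |⟪x, s - t⟫| ≤ ‖x‖ * ‖s - t‖ := abs_real_inner_le_norm x (s - t)
              _ ≤ R * dist t s := by
                  rw [← dist_eq_norm, dist_comm s t]
                  exact mul_le_mul_of_nonneg_right hxn dist_nonneg
          have h2 : ‖(χ x : ℂ)‖ ≤ 1 := by
            rw [Complex.norm_real, Real.norm_eq_abs, abs_le]
            exact ⟨by linarith [(hχmem x).1], (hχmem x).2⟩
          calc ‖bcf t x - bcf s x‖ * ‖(χ x : ℂ)‖ ≤ (2 * Real.pi * (R * dist t s)) * 1 :=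
                mul_le_mul h1 h2 (norm_nonneg _) (by positivity)
            _ = 2 * Real.pi * R * dist t s := by ring
      set w : EuclideanSpace ℝ (Fin d) →ᵇ ℂ :=
        BoundedContinuousFunction.ofNormedAddCommGroup _ hwc (2 * Real.pi * R * dist t s) hwb
        with hwdef
      have hw_apply : ∀ x, w x = (bcf t x - bcf s x) * (χ x : ℂ) := fun x => rfl
      have hTw : Φ t - Φ s = T w := by
        have hP0 : P (bcf t - bcf s - w) = fun _ => (0 : ℂ) := by
          funext x
          show ((bcf t - bcf s - w) x) * f x = 0
          by_cases hx : f x = 0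
          · rw [hx, mul_zero]
          · have hx1 : χ x = 1 :=
              hχ1 (subset_tsupport f (Function.mem_support.mpr hx))
            rw [BoundedContinuousFunction.coe_sub, Pi.sub_apply,
              BoundedContinuousFunction.coe_sub, Pi.sub_apply, hw_apply, hx1]
            push_cast
            ring
        have hF0 : 𝓕 (P (bcf t - bcf s - w)) = fun _ => (0 : ℂ) := by
          rw [hP0]
          funext z
          rw [Real.fourier_eq]
          simp
        have h0 : T (bcf t - bcf s - w) = 0 := by
          rw [hT_apply]
          show (hPm _).toLp _ = 0
          rw [MemLp.toLp_congr (hPm _) MemLp.zero (by rw [hF0]; rfl)]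
          exact MemLp.toLp_zero _
        have : Φ t - Φ s - T w = 0 := by
          rw [hΦT t, hΦT s, ← map_sub, ← map_sub]
          exact h0
        exact sub_eq_zero.mp this
      rw [hTw]
      calc ‖T w‖ ≤ ‖T‖ * ‖w‖ := T.le_opNorm _
        _ ≤ ‖T‖ * (2 * Real.pi * R * dist t s) :=
            mul_le_mul_of_nonneg_left
              (BoundedContinuousFunction.norm_ofNormedAddCommGroup_le hwc (by positivity) hwb)
              (norm_nonneg _)
    rw [Metric.uniformContinuous_iff]
    intro ε hε
    set M : ℝ := 2 * (Cg * (‖T‖ * ‖T‖) * (2 * Real.pi * R)) with hMdef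
    have hM0 : 0 ≤ M := by positivity
    refine ⟨ε / (M + 1), by positivity, fun {t s} hts => ?_⟩
    rw [dist_eq_norm]
    have hsplit : (∫ x, (‖𝓕 f (x + t)‖ ^ 2 : ℂ) * g x ∂ρ)
        - (∫ x, (‖𝓕 f (x + s)‖ ^ 2 : ℂ) * g x ∂ρ)
        = (inner ℂ (Φ t - Φ s) (Ψ t) : ℂ) + (inner ℂ (Φ s) (Ψ t - Ψ s) : ℂ) := by
      rw [hkey t, hkey s, inner_sub_left, inner_sub_right]
      ring
    rw [hsplit]
    have hb1 : ‖(inner ℂ (Φ t - Φ s) (Ψ t) : ℂ)‖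
        ≤ (‖T‖ * (2 * Real.pi * R * dist t s)) * (Cg * ‖T‖) :=
      (norm_inner_le_norm _ _).trans
        (mul_le_mul (hΦlip t s)
          ((hΨnorm t).trans (mul_le_mul_of_nonneg_left (hΦnorm t) hCg0))
          (norm_nonneg _) (by positivity))
    have hb2 : ‖(inner ℂ (Φ s) (Ψ t - Ψ s) : ℂ)‖
        ≤ ‖T‖ * (Cg * (‖T‖ * (2 * Real.pi * R * dist t s))) :=
      (norm_inner_le_norm _ _).trans
        (mul_le_mul (hΦnorm s)
          ((hΨsub t s).trans (mul_le_mul_of_nonneg_left (hΦlip t s) hCg0))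
          (norm_nonneg _) (norm_nonneg _))
    have htotal : ‖(inner ℂ (Φ t - Φ s) (Ψ t) : ℂ) + (inner ℂ (Φ s) (Ψ t - Ψ s) : ℂ)‖
        ≤ M * dist t s := by
      refine (norm_add_le _ _).trans ?_
      calc ‖(inner ℂ (Φ t - Φ s) (Ψ t) : ℂ)‖ + ‖(inner ℂ (Φ s) (Ψ t - Ψ s) : ℂ)‖
          ≤ (‖T‖ * (2 * Real.pi * R * dist t s)) * (Cg * ‖T‖)
            + ‖T‖ * (Cg * (‖T‖ * (2 * Real.pi * R * dist t s))) := add_le_add hb1 hb2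
        _ = M * dist t s := by rw [hMdef]; ring
    refine htotal.trans_lt ?_
    have h1 : M * dist t s ≤ M * (ε / (M + 1)) :=
      mul_le_mul_of_nonneg_left (le_of_lt hts) hM0
    have h2 : M * (ε / (M + 1)) < ε := by
      rw [mul_div_assoc', div_lt_iff₀ (by positivity)]
      nlinarith
    exact h1.trans_lt h2
end
end
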